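/- For every nonempty finite set F and all integers T ≥ 1 and N ≥ 1, there exists a family of maps A_1,…,A_T, where A_t assigns to each sequence of max(t−N, 0) loss functions (each a function F → [0,1]) a finitely supported probability distribution on F, with the following property: for every sequence of loss functions ℓ^(1),…,ℓ^(T) : F → [0,1], setting μ^(t) := A_t(ℓ^(1),…,ℓ^(t−N)) (with μ^(t) depending on no losses when t ≤ N), one has ∑_{t=1}^{T} E_{f ∼ μ^(t)}[ℓ^(t)(f)] − 2 · min_{f ∈ F} ∑_{t=1}^{T} ℓ^(t)(f) ≤ 2N·log|F|, where log denotes the natural logarithm. -/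

import Mathlib

open Finset

noncomputable def ewW {α : Type*} (F : Finset α) (ℓ : ℕ → α → ℝ) (S : Finset ℕ) : ℝ :=
  ∑ f ∈ F, Real.exp (-(Real.log 2) * ∑ s ∈ S, ℓ s f)

lemma ewW_pos {α : Type*} (F : Finset α) (hF : F.Nonempty) (ℓ : ℕ → α → ℝ) (S : Finset ℕ) :
    0 < ewW F ℓ S :=
  Finset.sum_pos (fun f _ => Real.exp_pos _) hF

lemma exp_le_aux {y : ℝ} (h0 : 0 ≤ y) (h1 : y ≤ 1) :
    Real.exp (-(Real.log 2) * y) ≤ 1 - y / 2 := by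
  have hc := convexOn_exp.2 (Set.mem_univ (0:ℝ)) (Set.mem_univ (-(Real.log 2)))
    (by linarith : (0:ℝ) ≤ 1 - y) h0 (by ring)
  simp only [smul_eq_mul] at hc
  have h2 : Real.exp (-(Real.log 2)) = 1/2 := by
    rw [Real.exp_neg, Real.exp_log] <;> norm_num
  calc Real.exp (-(Real.log 2) * y) = Real.exp ((1-y)*0 + y * (-(Real.log 2))) := by ring_nf
    _ ≤ (1-y) * Real.exp 0 + y * Real.exp (-(Real.log 2)) := hc
    _ = 1 - y/2 := by rw [h2, Real.exp_zero]; ring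

lemma ew_potential {α : Type*} (F : Finset α) (hF : F.Nonempty) (ℓ : ℕ → α → ℝ) :
    ∀ S : Finset ℕ, (∀ s ∈ S, ∀ f ∈ F, ℓ s f ∈ Set.Icc (0:ℝ) 1) →
    (1/2) * ∑ t ∈ S, ∑ f ∈ F,
        (Real.exp (-(Real.log 2) * ∑ s ∈ S.filter (· < t), ℓ s f) /
          ewW F ℓ (S.filter (· < t))) * ℓ t f
      ≤ Real.log (ewW F ℓ ∅) - Real.log (ewW F ℓ S) := by
  intro S
  induction S using Finset.induction_on_max with
  | empty => intro _; simp
  | insert a s ha IH =>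
    intro hb
    have has : a ∉ s := fun h => absurd (ha a h) (lt_irrefl a)
    -- rewrite the filters
    have hfilt : ∀ t ∈ s, (insert a s).filter (· < t) = s.filter (· < t) := by
      intro t ht
      rw [Finset.filter_insert, if_neg]
      exact fun h => absurd (lt_trans h (ha t ht)) (lt_irrefl a)
    have hfilta : (insert a s).filter (· < a) = s := by
      rw [Finset.filter_insert, if_neg (lt_irrefl a)]
      exact Finset.filter_true_of_mem ha
    have hbs : ∀ t ∈ s, ∀ f ∈ F, ℓ t f ∈ Set.Icc (0:ℝ) 1 := fun t ht =>
      hb t (Finset.mem_insert_of_mem ht)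
    have IH' := IH hbs
    rw [Finset.sum_insert has]
    have hrw : ∑ t ∈ s, ∑ f ∈ F,
        (Real.exp (-(Real.log 2) * ∑ u ∈ (insert a s).filter (· < t), ℓ u f) /
          ewW F ℓ ((insert a s).filter (· < t))) * ℓ t f
        = ∑ t ∈ s, ∑ f ∈ F,
        (Real.exp (-(Real.log 2) * ∑ u ∈ s.filter (· < t), ℓ u f) /
          ewW F ℓ (s.filter (· < t))) * ℓ t f := by
      apply Finset.sum_congr rfl
      intro t ht
      rw [hfilt t ht]
    rw [hrw, hfilta]
    -- key step
    set x := ∑ f ∈ F, (Real.exp (-(Real.log 2) * ∑ u ∈ s, ℓ u f) / ewW F ℓ s) * ℓ a f with hx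
    have hWs := ewW_pos F hF ℓ s
    have hx0 : 0 ≤ x := by
      apply Finset.sum_nonneg
      intro f hf
      exact mul_nonneg (div_nonneg (Real.exp_pos _).le hWs.le) (hb a (Finset.mem_insert_self a s) f hf).1
    have hx1 : x ≤ 1 := by
      have h1 : x ≤ (∑ f ∈ F, Real.exp (-(Real.log 2) * ∑ u ∈ s, ℓ u f)) / ewW F ℓ s := by
        rw [Finset.sum_div]
        apply Finset.sum_le_sum
        intro f hf
        rw [div_mul_eq_mul_div]
        apply div_le_div_of_nonneg_right ?_ hWs.le
        nth_rewrite 2 [← mul_one (Real.exp _)]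
        exact mul_le_mul_of_nonneg_left (hb a (Finset.mem_insert_self a s) f hf).2
          (Real.exp_pos _).le
      rwa [show (∑ f ∈ F, Real.exp (-(Real.log 2) * ∑ u ∈ s, ℓ u f)) = ewW F ℓ s from rfl,
        div_self hWs.ne'] at h1
    have hxeq : x = (∑ f ∈ F, Real.exp (-(Real.log 2) * ∑ u ∈ s, ℓ u f) * ℓ a f) / ewW F ℓ s := by
      rw [hx, Finset.sum_div]
      exact Finset.sum_congr rfl fun f _ => div_mul_eq_mul_div _ _ _
    have hstep : ewW F ℓ (insert a s) ≤ ewW F ℓ s * (1 - x/2) := by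
      have h2 : ewW F ℓ (insert a s) ≤ ∑ f ∈ F,
          Real.exp (-(Real.log 2) * ∑ u ∈ s, ℓ u f) * (1 - ℓ a f / 2) := by
        apply Finset.sum_le_sum
        intro f hf
        rw [Finset.sum_insert has]
        have h3 : Real.exp (-(Real.log 2) * (ℓ a f + ∑ u ∈ s, ℓ u f))
            = Real.exp (-(Real.log 2) * ∑ u ∈ s, ℓ u f) * Real.exp (-(Real.log 2) * ℓ a f) := by
          rw [← Real.exp_add]; ring_nf
        rw [h3]
        exact mul_le_mul_of_nonneg_left
          (exp_le_aux (hb a (Finset.mem_insert_self a s) f hf).1 (hb a (Finset.mem_insert_self a s) f hf).2)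
          (Real.exp_pos _).le
      have h4 : ∑ f ∈ F, Real.exp (-(Real.log 2) * ∑ u ∈ s, ℓ u f) * (1 - ℓ a f / 2)
          = ewW F ℓ s - (∑ f ∈ F, Real.exp (-(Real.log 2) * ∑ u ∈ s, ℓ u f) * ℓ a f) / 2 := by
        rw [ewW, Finset.sum_div, ← Finset.sum_sub_distrib]
        exact Finset.sum_congr rfl fun f _ => by ring
      have h5 : ewW F ℓ s * (1 - x/2)
          = ewW F ℓ s - (∑ f ∈ F, Real.exp (-(Real.log 2) * ∑ u ∈ s, ℓ u f) * ℓ a f) / 2 := by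
        rw [hxeq]
        field_simp
      linarith
    have hpos : (0:ℝ) < 1 - x/2 := by linarith
    have hlog : Real.log (ewW F ℓ (insert a s)) ≤ Real.log (ewW F ℓ s) + Real.log (1 - x/2) := by
      rw [← Real.log_mul hWs.ne' hpos.ne']
      exact Real.log_le_log (ewW_pos F hF ℓ _) hstep
    have hlog2 : Real.log (1 - x/2) ≤ -(x/2) := by
      have := Real.log_le_sub_one_of_pos hpos
      linarith
    have := IH'
    linarith

lemma ew_bound {α : Type*} (F : Finset α) (hF : F.Nonempty) (ℓ : ℕ → α → ℝ)
    (S : Finset ℕ) (hb : ∀ s ∈ S, ∀ f ∈ F, ℓ s f ∈ Set.Icc (0:ℝ) 1)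
    (f₀ : α) (hf₀ : f₀ ∈ F) :
    ∑ t ∈ S, ∑ f ∈ F,
        (Real.exp (-(Real.log 2) * ∑ s ∈ S.filter (· < t), ℓ s f) /
          ewW F ℓ (S.filter (· < t))) * ℓ t f
      ≤ 2 * Real.log F.card + 2 * Real.log 2 * ∑ s ∈ S, ℓ s f₀ := by
  have hpot := ew_potential F hF ℓ S hb
  have h0 : ewW F ℓ ∅ = F.card := by
    rw [ewW]
    simp
  have h1 : -(Real.log 2) * ∑ s ∈ S, ℓ s f₀ ≤ Real.log (ewW F ℓ S) := by
    have h2 : Real.exp (-(Real.log 2) * ∑ s ∈ S, ℓ s f₀) ≤ ewW F ℓ S :=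
      Finset.single_le_sum (f := fun f => Real.exp (-(Real.log 2) * ∑ s ∈ S, ℓ s f))
        (fun f _ => (Real.exp_pos _).le) hf₀
    calc -(Real.log 2) * ∑ s ∈ S, ℓ s f₀
        = Real.log (Real.exp (-(Real.log 2) * ∑ s ∈ S, ℓ s f₀)) := (Real.log_exp _).symm
      _ ≤ Real.log (ewW F ℓ S) := Real.log_le_log (Real.exp_pos _) h2
  rw [h0] at hpot
  linarith

lemma index_eq (N T t : ℕ) (hN : 1 ≤ N) (ht : t ∈ Finset.Icc 1 T) (c : ℕ → ℝ) :
    ∑ i ∈ (Finset.range (t - N)).filter (fun i => (i + 1) % N = t % N), c (i + 1)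
      = ∑ u ∈ ((Finset.Icc 1 T).filter (fun u => u % N = t % N)).filter (· < t), c u := by
  rw [Finset.mem_Icc] at ht
  apply Finset.sum_nbij' (i := fun i => i + 1) (j := fun u => u - 1)
  · intro i hi
    simp only [Finset.mem_filter, Finset.mem_range, Finset.mem_Icc] at hi ⊢
    omega
  · intro u hu
    simp only [Finset.mem_filter, Finset.mem_range, Finset.mem_Icc] at hu ⊢
    obtain ⟨⟨⟨hu1, huT⟩, hmod⟩, hut⟩ := hu
    have hdvd : N ∣ t - u := (Nat.modEq_iff_dvd' (le_of_lt hut)).mp hmod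
    have hle : N ≤ t - u := Nat.le_of_dvd (by omega) hdvd
    constructor
    · omega
    · rwa [Nat.sub_add_cancel hu1]
  · intro i hi; omega
  · intro u hu
    simp only [Finset.mem_filter, Finset.mem_Icc] at hu
    omega
  · intro i hi; rfl

lemma fin_filter_sum (n : ℕ) (p : ℕ → Prop) [DecidablePred p] (q : ℕ → ℝ) :
    ∑ s ∈ Finset.univ.filter (fun s : Fin n => p s.val), q s.val
      = ∑ i ∈ (Finset.range n).filter p, q i := by
  rw [Finset.sum_filter, Finset.sum_filter]
  exact Fin.sum_univ_eq_sum_range (fun i => if p i then q i else 0) n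



/-- Existence of a delayed online learning strategy over a finite class `F`
with delay `N`: the map `A t` sees only the losses of rounds `1,…,t−N` (encoded as a tuple
indexed by `Fin (t - N)`, where `t - N` is truncated natural subtraction, i.e. `max(t−N,0)`)
and produces a probability distribution on `F`; its 2-regret against any `[0,1]`-valued loss
sequence is at most `2N·log|F|`. -/
theorem delayed_exponential_weights {α : Type*} (F : Finset α) (hF : F.Nonempty)
    (T N : ℕ) (hT : 1 ≤ T) (hN : 1 ≤ N) :
    ∃ A : (t : ℕ) → (Fin (t - N) → (α → ℝ)) → (α → ℝ),
      (∀ t g, (∀ f, 0 ≤ A t g f) ∧ ∑ f ∈ F, A t g f = 1) ∧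
      ∀ ℓ : ℕ → α → ℝ,
        (∀ t ∈ Finset.Icc 1 T, ∀ f ∈ F, ℓ t f ∈ Set.Icc (0 : ℝ) 1) →
        ∑ t ∈ Finset.Icc 1 T, ∑ f ∈ F, A t (fun s => ℓ (s.val + 1)) f * ℓ t f
          - 2 * F.inf' hF (fun f => ∑ t ∈ Finset.Icc 1 T, ℓ t f)
          ≤ 2 * N * Real.log (F.card) := by
  classical
  -- the cumulative loss seen by round t's copy
  set L : (t : ℕ) → (Fin (t - N) → (α → ℝ)) → α → ℝ :=
    fun t g f => ∑ s ∈ Finset.univ.filter (fun s : Fin (t - N) => (s.val + 1) % N = t % N),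
      g s f with hL
  refine ⟨fun t g f => if f ∈ F then
      Real.exp (-(Real.log 2) * L t g f) /
        (∑ f' ∈ F, Real.exp (-(Real.log 2) * L t g f')) else 0, ?_, ?_⟩
  · intro t g
    dsimp only
    have hZ : 0 < ∑ f' ∈ F, Real.exp (-(Real.log 2) * L t g f') :=
      Finset.sum_pos (fun f _ => Real.exp_pos _) hF
    constructor
    · intro f
      split
      · exact div_nonneg (Real.exp_pos _).le hZ.le
      · exact le_refl 0
    · rw [Finset.sum_congr rfl (fun f hf => if_pos hf), ← Finset.sum_div, div_self hZ.ne']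
  · intro ℓ hb
    dsimp only
    obtain ⟨f₀, hf₀, hinf⟩ := Finset.exists_mem_eq_inf' hF (fun f => ∑ t ∈ Finset.Icc 1 T, ℓ t f)
    rw [hinf]
    have hmaps : ∀ t ∈ Finset.Icc 1 T, t % N ∈ Finset.range N :=
      fun t _ => Finset.mem_range.2 (Nat.mod_lt _ hN)
    -- partition rounds by residue
    rw [← Finset.sum_fiberwise_of_maps_to hmaps
      (fun t => ∑ f ∈ F, (if f ∈ F then
        Real.exp (-(Real.log 2) * L t (fun s => ℓ (s.val + 1)) f) /
          (∑ f' ∈ F, Real.exp (-(Real.log 2) * L t (fun s => ℓ (s.val + 1)) f')) else 0) * ℓ t f)]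
    have hLsum : ∑ t ∈ Finset.Icc 1 T, ℓ t f₀
        = ∑ r ∈ Finset.range N, ∑ t ∈ (Finset.Icc 1 T).filter (fun t => t % N = r), ℓ t f₀ :=
      (Finset.sum_fiberwise_of_maps_to hmaps _).symm
    have key : ∀ r ∈ Finset.range N,
        ∑ t ∈ (Finset.Icc 1 T).filter (fun t => t % N = r),
          ∑ f ∈ F, (if f ∈ F then
            Real.exp (-(Real.log 2) * L t (fun s => ℓ (s.val + 1)) f) /
              (∑ f' ∈ F, Real.exp (-(Real.log 2) * L t (fun s => ℓ (s.val + 1)) f')) else 0) * ℓ t f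
        ≤ 2 * Real.log F.card
          + 2 * Real.log 2 * ∑ t ∈ (Finset.Icc 1 T).filter (fun t => t % N = r), ℓ t f₀ := by
      intro r hr
      set S := (Finset.Icc 1 T).filter (fun t => t % N = r) with hS
      have hbS : ∀ s ∈ S, ∀ f ∈ F, ℓ s f ∈ Set.Icc (0:ℝ) 1 :=
        fun s hs => hb s (Finset.mem_filter.1 hs).1
      have heq : ∀ t ∈ S, ∀ f, L t (fun s => ℓ (s.val + 1)) f
          = ∑ u ∈ S.filter (· < t), ℓ u f := by
        intro t ht f
        obtain ⟨htI, htr⟩ := Finset.mem_filter.1 ht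
        rw [hL]
        have := fin_filter_sum (t - N) (fun i => (i + 1) % N = t % N) (fun u => ℓ u f)
        -- careful with the +1 shift
        calc ∑ s ∈ Finset.univ.filter (fun s : Fin (t - N) => (s.val + 1) % N = t % N),
              ℓ (s.val + 1) f
            = ∑ i ∈ (Finset.range (t - N)).filter (fun i => (i + 1) % N = t % N), ℓ (i + 1) f := by
              rw [Finset.sum_filter, Finset.sum_filter]
              exact Fin.sum_univ_eq_sum_range
                (fun i => if (i + 1) % N = t % N then ℓ (i + 1) f else 0) (t - N)
          _ = ∑ u ∈ ((Finset.Icc 1 T).filter (fun u => u % N = t % N)).filter (· < t), ℓ u f :=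
              index_eq N T t hN htI (fun u => ℓ u f)
          _ = ∑ u ∈ S.filter (· < t), ℓ u f := by
              rw [hS, htr]
      have hrw2 : ∑ t ∈ S, ∑ f ∈ F, (if f ∈ F then
            Real.exp (-(Real.log 2) * L t (fun s => ℓ (s.val + 1)) f) /
              (∑ f' ∈ F, Real.exp (-(Real.log 2) * L t (fun s => ℓ (s.val + 1)) f')) else 0) * ℓ t f
          = ∑ t ∈ S, ∑ f ∈ F,
              (Real.exp (-(Real.log 2) * ∑ u ∈ S.filter (· < t), ℓ u f) /
                ewW F ℓ (S.filter (· < t))) * ℓ t f := by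
        apply Finset.sum_congr rfl
        intro t ht
        apply Finset.sum_congr rfl
        intro f hf
        rw [if_pos hf, heq t ht f, ewW]
        congr 1
        congr 1
        apply Finset.sum_congr rfl
        intro f' hf'
        rw [heq t ht f']
      rw [hrw2]
      exact ew_bound F hF ℓ S hbS f₀ hf₀
    have htotal := Finset.sum_le_sum key
    rw [hLsum]
    have hcard : (1:ℝ) ≤ F.card := by
      exact_mod_cast Nat.one_le_iff_ne_zero.2 (Finset.card_ne_zero_of_mem hf₀)
    have hlogK : 0 ≤ Real.log F.card := Real.log_nonneg hcard
    have hlog2 : Real.log 2 ≤ 1 := by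
      have := Real.log_le_sub_one_of_pos (by norm_num : (0:ℝ) < 2)
      linarith
    have hlog2' : 0 ≤ Real.log 2 := Real.log_nonneg (by norm_num)
    have hLnn : ∀ r ∈ Finset.range N,
        0 ≤ ∑ t ∈ (Finset.Icc 1 T).filter (fun t => t % N = r), ℓ t f₀ := by
      intro r hr
      apply Finset.sum_nonneg
      intro t ht
      exact (hb t (Finset.mem_filter.1 ht).1 f₀ hf₀).1
    have hsum0 : 0 ≤ ∑ r ∈ Finset.range N,
        ∑ t ∈ (Finset.Icc 1 T).filter (fun t => t % N = r), ℓ t f₀ :=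
      Finset.sum_nonneg hLnn
    have hsumconst : ∑ r ∈ Finset.range N, (2 * Real.log F.card
          + 2 * Real.log 2 * ∑ t ∈ (Finset.Icc 1 T).filter (fun t => t % N = r), ℓ t f₀)
        = N * (2 * Real.log F.card) + 2 * Real.log 2 *
          ∑ r ∈ Finset.range N, ∑ t ∈ (Finset.Icc 1 T).filter (fun t => t % N = r), ℓ t f₀ := by
      rw [Finset.sum_add_distrib, Finset.sum_const, Finset.card_range, ← Finset.mul_sum]
      simp [nsmul_eq_mul]
    rw [hsumconst] at htotal
    set Lstar := ∑ r ∈ Finset.range N,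
        ∑ t ∈ (Finset.Icc 1 T).filter (fun t => t % N = r), ℓ t f₀ with hLs
    have h2l : 2 * Real.log 2 * Lstar ≤ 2 * Lstar := by nlinarith
    have hNge : (1:ℝ) ≤ N := by exact_mod_cast hN
    nlinarith
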